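/- Let D be a self-adjoint operator on H and a ∈ B(H) be weakly D-differentiable. Then the ultraweak (equivalently, weak-operator, since the family is bounded) limit of (α_t(a) − a)/(it) as t → 0 exists and equals wD(a); in particular, for all μ, ν ∈ H, the function t ↦ ⟨α_t(a) μ, ν⟩ is differentiable at t = 0 with derivative i⟨wD(a) μ, ν⟩. -/

import Mathlib

open Complex Filter Topology MeasureTheory
open scoped Topology

local notation "⟪" x ", " y "⟫" => @inner ℂ _ _ x y

variable {H : Type*} [NormedAddCommGroup H] [InnerProductSpace ℂ H] [CompleteSpace H]

/-- `b` is the bounded operator implementing the commutator form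
`(ξ, η) ↦ ⟨aξ, Dη⟩ − ⟨aDξ, η⟩` on `dom D × dom D`; i.e. `a` is weakly `D`-differentiable
with derivative `wD(a) = b`. -/
def IsWeakDeriv (D : H →ₗ.[ℂ] H) (a b : H →L[ℂ] H) : Prop :=
  ∀ ξ η : D.domain, ⟪b (ξ : H), (η : H)⟫ = ⟪a (ξ : H), D η⟫ - ⟪a (D ξ), (η : H)⟫

/-- `conjAd U t a = U t ∘ a ∘ U (−t)`, i.e. `α_t(a) = e^{itD} a e^{-itD}`. -/
noncomputable def conjAd (U : ℝ → H →L[ℂ] H) (t : ℝ) (a : H →L[ℂ] H) : H →L[ℂ] H :=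
  (U t).comp (a.comp (U (-t)))

/-- `U` is the strongly continuous one-parameter unitary group `t ↦ e^{itD}`
generated by the self-adjoint operator `D` (Stone's theorem characterization). -/
structure IsStoneGroupOf (D : H →ₗ.[ℂ] H) (U : ℝ → H →L[ℂ] H) : Prop where
  map_zero : U 0 = 1
  map_add : ∀ s t : ℝ, U (s + t) = (U s).comp (U t)
  isometry : ∀ (t : ℝ) (ξ : H), ‖U t ξ‖ = ‖ξ‖
  hasDerivAt : ∀ ξ : D.domain, HasDerivAt (fun t : ℝ => U t (ξ : H)) (Complex.I • D ξ) 0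
  mem_domain : ∀ ξ v : H, HasDerivAt (fun t : ℝ => U t ξ) v 0 → ξ ∈ D.domain

set_option linter.unusedSectionVars false

section Aux
variable {D : H →ₗ.[ℂ] H} {U : ℝ → H →L[ℂ] H}

lemma U_apply_apply (hU : IsStoneGroupOf D U) (s t : ℝ) (x : H) :
    U s (U t x) = U (s + t) x := by
  rw [hU.map_add]; rfl

lemma U_inv (hU : IsStoneGroupOf D U) (t : ℝ) (x : H) : U t (U (-t) x) = x := by
  rw [U_apply_apply hU, add_neg_cancel, hU.map_zero]; rfl

lemma U_inner (hU : IsStoneGroupOf D U) (t : ℝ) (x y : H) :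
    ⟪U t x, U t y⟫ = ⟪x, y⟫ := by
  exact LinearIsometry.inner_map_map ⟨(U t).toLinearMap, hU.isometry t⟩ x y

lemma U_adj (hU : IsStoneGroupOf D U) (t : ℝ) (x y : H) :
    ⟪x, U t y⟫ = ⟪U (-t) x, y⟫ := by
  conv_lhs => rw [← U_inv hU t x]
  exact U_inner hU t _ y

end Aux

section Aux2
set_option linter.unusedSectionVars false
variable {D : H →ₗ.[ℂ] H} {U : ℝ → H →L[ℂ] H}

lemma U_hasDerivAt0' (hU : IsStoneGroupOf D U) (ξ : D.domain) (t : ℝ) :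
    HasDerivAt (fun s : ℝ => U s (U t (ξ : H))) (U t (Complex.I • D ξ)) 0 := by
  have h1 : HasDerivAt (fun s : ℝ => U t (U s (ξ : H))) (U t (Complex.I • D ξ)) 0 := by
    simpa using (hasDerivAt_const (0:ℝ) ((U t).restrictScalars ℝ)).clm_apply (hU.hasDerivAt ξ)
  have h2 : (fun s : ℝ => U t (U s (ξ : H))) = fun s : ℝ => U s (U t (ξ : H)) := by
    funext s
    rw [U_apply_apply hU, U_apply_apply hU, add_comm]
  rwa [h2] at h1

lemma U_mem_domain (hU : IsStoneGroupOf D U) (ξ : D.domain) (t : ℝ) :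
    U t (ξ : H) ∈ D.domain :=
  hU.mem_domain _ _ (U_hasDerivAt0' hU ξ t)

lemma U_comm_D (hU : IsStoneGroupOf D U) (ξ : D.domain) (t : ℝ) :
    D ⟨U t (ξ : H), U_mem_domain hU ξ t⟩ = U t (D ξ) := by
  have h3 := (U_hasDerivAt0' hU ξ t).unique (hU.hasDerivAt ⟨U t (ξ : H), U_mem_domain hU ξ t⟩)
  rw [(U t).map_smul] at h3
  exact (smul_right_injective H Complex.I_ne_zero h3).symm

lemma U_hasDerivAt (hU : IsStoneGroupOf D U) (ξ : D.domain) (t : ℝ) :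
    HasDerivAt (fun s : ℝ => U s (ξ : H)) (Complex.I • U t (D ξ)) t := by
  have h0 : HasDerivAt (fun r : ℝ => U r (ξ : H)) (Complex.I • (D ξ : H)) (t - t) := by
    simpa using hU.hasDerivAt ξ
  have hg : HasDerivAt (fun s : ℝ => U (s - t) (ξ : H)) (Complex.I • (D ξ : H)) t :=
    h0.comp_sub_const t t
  have h2 : HasDerivAt (fun s : ℝ => U t (U (s - t) (ξ : H)))
      (U t (Complex.I • (D ξ : H))) t := by
    simpa using (hasDerivAt_const t ((U t).restrictScalars ℝ)).clm_apply hg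
  have h3 : (fun s : ℝ => U t (U (s - t) (ξ : H))) = fun s : ℝ => U s (ξ : H) := by
    funext s
    have hts : t + (s - t) = s := by ring
    rw [U_apply_apply hU, hts]
  rw [h3, (U t).map_smul] at h2
  exact h2

end Aux2

section Key
set_option linter.unusedSectionVars false
variable {D : H →ₗ.[ℂ] H} {U : ℝ → H →L[ℂ] H} {a b : H →L[ℂ] H}

lemma conjAd_inner (hU : IsStoneGroupOf D U) (a : H →L[ℂ] H) (s : ℝ) (μ ν : H) :
    ⟪ν, conjAd U s a μ⟫ = ⟪U (-s) ν, a (U (-s) μ)⟫ := by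
  simp only [conjAd, ContinuousLinearMap.comp_apply]
  rw [U_adj hU]

lemma key_hasDerivAt (hU : IsStoneGroupOf D U) (hw : IsWeakDeriv D a b)
    (ξ η : D.domain) (t : ℝ) :
    HasDerivAt (fun s : ℝ => ⟪(η : H), conjAd U s a (ξ : H)⟫)
      (Complex.I * ⟪U (-t) (η : H), b (U (-t) (ξ : H))⟫) t := by
  have hq : HasDerivAt (fun s : ℝ => U (-s) (ξ : H))
      ((-1 : ℝ) • Complex.I • U (-t) (D ξ)) t := by
    have h0 : HasDerivAt (fun r : ℝ => U r (ξ : H)) (Complex.I • U (-t) (D ξ)) ((0:ℝ) - t) := by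
      simpa using U_hasDerivAt hU ξ (-t)
    simpa using h0.comp_const_sub 0 t
  have hp : HasDerivAt (fun s : ℝ => U (-s) (η : H))
      ((-1 : ℝ) • Complex.I • U (-t) (D η)) t := by
    have h0 : HasDerivAt (fun r : ℝ => U r (η : H)) (Complex.I • U (-t) (D η)) ((0:ℝ) - t) := by
      simpa using U_hasDerivAt hU η (-t)
    simpa using h0.comp_const_sub 0 t
  have haq : HasDerivAt (fun s : ℝ => a (U (-s) (ξ : H)))
      (a ((-1 : ℝ) • Complex.I • U (-t) (D ξ))) t := by
    simpa using (hasDerivAt_const t (a.restrictScalars ℝ)).clm_apply hq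
  have hinner := (HasDerivAt.inner ℂ hp haq :
    HasDerivAt (fun s : ℝ => ⟪U (-s) (η : H), a (U (-s) (ξ : H))⟫) _ t)
  have heq : (fun s : ℝ => ⟪U (-s) (η : H), a (U (-s) (ξ : H))⟫)
      = fun s : ℝ => ⟪(η : H), conjAd U s a (ξ : H)⟫ := by
    funext s
    rw [conjAd_inner hU]
  rw [heq] at hinner
  convert hinner using 1
  case e'_4 => rfl
  -- derivative value identification
  set ξ' : D.domain := ⟨U (-t) (ξ : H), U_mem_domain hU ξ (-t)⟩ with hξ'
  set η' : D.domain := ⟨U (-t) (η : H), U_mem_domain hU η (-t)⟩ with hη'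
  have hDξ' : (D ξ' : H) = U (-t) (D ξ) := U_comm_D hU ξ (-t)
  have hDη' : (D η' : H) = U (-t) (D η) := U_comm_D hU η (-t)
  have hhw := hw ξ' η'
  have hconj : ⟪(η' : H), b (ξ' : H)⟫
      = ⟪(D η' : H), a (ξ' : H)⟫ - ⟪(η' : H), a (D ξ' : H)⟫ := by
    have := congrArg (starRingEnd ℂ) hhw
    simpa [inner_conj_symm] using this
  have hη'c : (η' : H) = U (-t) (η : H) := rfl
  have hξ'c : (ξ' : H) = U (-t) (ξ : H) := rfl
  rw [hη'c, hξ'c, hDξ', hDη'] at hconj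
  rw [hconj]
  simp only [neg_smul, one_smul, map_neg, a.map_smul, inner_neg_left, inner_neg_right,
    inner_smul_left, inner_smul_right, Complex.conj_I]
  ring

end Key

section Est
set_option linter.unusedSectionVars false
variable {D : H →ₗ.[ℂ] H} {U : ℝ → H →L[ℂ] H} {a b : H →L[ℂ] H}

lemma conjAd_zero (hU : IsStoneGroupOf D U) (a : H →L[ℂ] H) : conjAd U 0 a = a := by
  ext x
  simp [conjAd, neg_zero, hU.map_zero]

lemma est_dom (hU : IsStoneGroupOf D U) (hw : IsWeakDeriv D a b) (ξ η : D.domain) (t : ℝ) :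
    ‖⟪(η : H), conjAd U t a (ξ : H) - a (ξ : H)⟫‖ ≤ ‖b‖ * ‖(ξ : H)‖ * ‖(η : H)‖ * |t| := by
  have bound : ∀ s ∈ Set.univ,
      ‖Complex.I * ⟪U (-s) (η : H), b (U (-s) (ξ : H))⟫‖ ≤ ‖b‖ * ‖(ξ : H)‖ * ‖(η : H)‖ := by
    intro s _
    rw [norm_mul, Complex.norm_I, one_mul]
    calc ‖⟪U (-s) (η : H), b (U (-s) (ξ : H))⟫‖
        ≤ ‖U (-s) (η : H)‖ * ‖b (U (-s) (ξ : H))‖ := norm_inner_le_norm _ _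
      _ ≤ ‖(η : H)‖ * (‖b‖ * ‖(ξ : H)‖) := by
          rw [hU.isometry]
          refine mul_le_mul_of_nonneg_left ?_ (norm_nonneg _)
          calc ‖b (U (-s) (ξ : H))‖ ≤ ‖b‖ * ‖U (-s) (ξ : H)‖ := b.le_opNorm _
            _ = ‖b‖ * ‖(ξ : H)‖ := by rw [hU.isometry]
      _ = ‖b‖ * ‖(ξ : H)‖ * ‖(η : H)‖ := by ring
  have hmv := convex_univ.norm_image_sub_le_of_norm_hasDerivWithin_le
    (fun s _ => (key_hasDerivAt hU hw ξ η s).hasDerivWithinAt) bound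
    (Set.mem_univ (0 : ℝ)) (Set.mem_univ t)
  rw [conjAd_zero hU] at hmv
  rw [inner_sub_right]
  calc ‖⟪(η : H), conjAd U t a (ξ : H)⟫ - ⟪(η : H), a (ξ : H)⟫‖
      ≤ ‖b‖ * ‖(ξ : H)‖ * ‖(η : H)‖ * ‖t - 0‖ := hmv
    _ = ‖b‖ * ‖(ξ : H)‖ * ‖(η : H)‖ * |t| := by rw [sub_zero, Real.norm_eq_abs]

lemma est_all (hD : Dense (D.domain : Set H)) (hU : IsStoneGroupOf D U)
    (hw : IsWeakDeriv D a b) (μ ν : H) (t : ℝ) :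
    ‖⟪ν, conjAd U t a μ - a μ⟫‖ ≤ ‖b‖ * ‖μ‖ * ‖ν‖ * |t| := by
  -- first extend in μ for fixed η ∈ dom D, then in ν
  have step1 : ∀ (η : D.domain) (μ : H),
      ‖⟪(η : H), conjAd U t a μ - a μ⟫‖ ≤ ‖b‖ * ‖μ‖ * ‖(η : H)‖ * |t| := by
    intro η μ
    have hclosed : IsClosed {x : H |
        ‖⟪(η : H), conjAd U t a x - a x⟫‖ ≤ ‖b‖ * ‖x‖ * ‖(η : H)‖ * |t|} := by
      apply isClosed_le
      · exact (Continuous.inner (𝕜 := ℂ) continuous_const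
          ((conjAd U t a).continuous.sub a.continuous)).norm
      · fun_prop
    exact (hclosed.closure_subset_iff.2
      (fun x hx => est_dom hU hw ⟨x, hx⟩ η t)) (hD μ)
  have hclosed : IsClosed {y : H |
      ‖⟪y, conjAd U t a μ - a μ⟫‖ ≤ ‖b‖ * ‖μ‖ * ‖y‖ * |t|} := by
    apply isClosed_le
    · exact (Continuous.inner (𝕜 := ℂ) continuous_id continuous_const).norm
    · fun_prop
  exact (hclosed.closure_subset_iff.2 (fun y hy => step1 ⟨y, hy⟩ μ)) (hD ν)

end Est

section Main
set_option linter.unusedSectionVars false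
variable {D : H →ₗ.[ℂ] H} {U : ℝ → H →L[ℂ] H} {a b : H →L[ℂ] H}

lemma inv_It_eq (t : ℝ) (ht : t ≠ 0) (X : ℂ) :
    (Complex.I * (t : ℂ))⁻¹ * X = -Complex.I * ((t : ℝ)⁻¹ • X) := by
  have htC : (t : ℂ) ≠ 0 := Complex.ofReal_ne_zero.2 ht
  rw [Complex.real_smul, Complex.ofReal_inv, mul_inv, Complex.inv_I]
  ring

lemma dom_tendsto (hU : IsStoneGroupOf D U) (hw : IsWeakDeriv D a b) (ξ η : D.domain) :
    Tendsto (fun t : ℝ => (Complex.I * (t : ℂ))⁻¹ * ⟪(η : H), conjAd U t a (ξ : H) - a (ξ : H)⟫)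
      (𝓝[≠] (0 : ℝ)) (𝓝 ⟪(η : H), b (ξ : H)⟫) := by
  have hd : HasDerivAt (fun s : ℝ => ⟪(η : H), conjAd U s a (ξ : H)⟫)
      (Complex.I * ⟪(η : H), b (ξ : H)⟫) 0 := by
    have := key_hasDerivAt hU hw ξ η 0
    rwa [neg_zero, hU.map_zero] at this
  have hs := hasDerivAt_iff_tendsto_slope.mp hd
  have h2 : Tendsto (fun t : ℝ => -Complex.I *
      slope (fun s : ℝ => ⟪(η : H), conjAd U s a (ξ : H)⟫) 0 t) (𝓝[≠] (0 : ℝ))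
      (𝓝 (-Complex.I * (Complex.I * ⟪(η : H), b (ξ : H)⟫))) := hs.const_mul _
  have hval : -Complex.I * (Complex.I * ⟪(η : H), b (ξ : H)⟫) = ⟪(η : H), b (ξ : H)⟫ := by
    rw [← mul_assoc, neg_mul, Complex.I_mul_I, neg_neg, one_mul]
  rw [hval] at h2
  refine h2.congr' ?_
  filter_upwards [self_mem_nhdsWithin] with t ht
  have ht' : (t : ℝ) ≠ 0 := ht
  rw [slope_def_module, sub_zero, conjAd_zero hU, inv_It_eq t ht', inner_sub_right]

lemma main_tendsto (hDd : Dense (D.domain : Set H)) (hU : IsStoneGroupOf D U)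
    (hw : IsWeakDeriv D a b) (μ ν : H) :
    Tendsto (fun t : ℝ => (Complex.I * (t : ℂ))⁻¹ * ⟪ν, conjAd U t a μ - a μ⟫)
      (𝓝[≠] (0 : ℝ)) (𝓝 ⟪ν, b μ⟫) := by
  rw [Metric.tendsto_nhdsWithin_nhds]
  intro ε hε
  set M := ‖b‖ + 1 with hM
  have hM0 : (0 : ℝ) < M := by positivity
  set R := ‖μ‖ + ‖ν‖ + 1 with hR
  have hR0 : (0 : ℝ) < R := by positivity
  set d := min 1 (ε / (3 * M * R)) with hd
  have hd0 : (0 : ℝ) < d := lt_min one_pos (by positivity)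
  obtain ⟨ξ0, hξ0mem, hξ0⟩ := hDd.exists_dist_lt μ hd0
  obtain ⟨η0, hη0mem, hη0⟩ := hDd.exists_dist_lt ν hd0
  rw [dist_eq_norm] at hξ0 hη0
  have hη0norm : ‖η0‖ ≤ ‖ν‖ + 1 := by
    have : ‖η0‖ ≤ ‖ν‖ + ‖ν - η0‖ := by
      calc ‖η0‖ = ‖ν - (ν - η0)‖ := by rw [sub_sub_cancel]
        _ ≤ ‖ν‖ + ‖ν - η0‖ := norm_sub_le _ _
    have hd1 : d ≤ 1 := min_le_left _ _
    linarith
  have hdom := dom_tendsto hU hw ⟨ξ0, hξ0mem⟩ ⟨η0, hη0mem⟩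
  rw [Metric.tendsto_nhdsWithin_nhds] at hdom
  obtain ⟨δ, hδ0, hδ⟩ := hdom (ε / 3) (by positivity)
  refine ⟨δ, hδ0, ?_⟩
  intro t ht htδ
  have ht' : (t : ℝ) ≠ 0 := ht
  have htabs : (0 : ℝ) < |t| := abs_pos.mpr ht'
  -- the three pieces
  set φ := fun s : ℝ => (Complex.I * (s : ℂ))⁻¹ * ⟪ν, conjAd U s a μ - a μ⟫ with hφ
  set ψ := fun s : ℝ => (Complex.I * (s : ℂ))⁻¹ * ⟪η0, conjAd U s a ξ0 - a ξ0⟫ with hψ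
  have hB : ‖ψ t - ⟪η0, b ξ0⟫‖ < ε / 3 := by
    have := hδ ht htδ
    rwa [dist_eq_norm] at this
  have hIt : ‖(Complex.I * (t : ℂ))⁻¹‖ = |t|⁻¹ := by
    rw [norm_inv, norm_mul, Complex.norm_I, one_mul, Complex.norm_real, Real.norm_eq_abs]
  have hA : ‖φ t - ψ t‖ ≤ ‖b‖ * ‖μ‖ * ‖ν - η0‖ + ‖b‖ * ‖μ - ξ0‖ * ‖η0‖ := by
    have hsplit : φ t - ψ t = (Complex.I * (t : ℂ))⁻¹ *
        (⟪ν - η0, conjAd U t a μ - a μ⟫ +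
          ⟪η0, conjAd U t a (μ - ξ0) - a (μ - ξ0)⟫) := by
      simp only [hφ, hψ, map_sub, inner_sub_left, inner_sub_right]
      ring
    rw [hsplit, norm_mul, hIt]
    have h1 := est_all hDd hU hw μ (ν - η0) t
    have h2 := est_all hDd hU hw (μ - ξ0) η0 t
    calc |t|⁻¹ * ‖⟪ν - η0, conjAd U t a μ - a μ⟫ +
          ⟪η0, conjAd U t a (μ - ξ0) - a (μ - ξ0)⟫‖
        ≤ |t|⁻¹ * (‖b‖ * ‖μ‖ * ‖ν - η0‖ * |t| + ‖b‖ * ‖μ - ξ0‖ * ‖η0‖ * |t|) := by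
          refine mul_le_mul_of_nonneg_left ?_ (by positivity)
          exact (norm_add_le _ _).trans (add_le_add h1 h2)
      _ = ‖b‖ * ‖μ‖ * ‖ν - η0‖ + ‖b‖ * ‖μ - ξ0‖ * ‖η0‖ := by
          field_simp
  have hC : ‖⟪(η0 : H), b ξ0⟫ - ⟪ν, b μ⟫‖ ≤ ‖b‖ * ‖μ‖ * ‖ν - η0‖ + ‖b‖ * ‖μ - ξ0‖ * ‖η0‖ := by
    have hsplit : ⟪(η0 : H), b ξ0⟫ - ⟪ν, b μ⟫
        = -(⟪ν - η0, b μ⟫ + ⟪η0, b (μ - ξ0)⟫) := by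
      simp only [map_sub, inner_sub_left, inner_sub_right]
      ring
    rw [hsplit, norm_neg]
    have h1 : ‖⟪ν - η0, b μ⟫‖ ≤ ‖ν - η0‖ * (‖b‖ * ‖μ‖) :=
      (norm_inner_le_norm _ _).trans (by gcongr; exact b.le_opNorm μ)
    have h2 : ‖⟪(η0 : H), b (μ - ξ0)⟫‖ ≤ ‖η0‖ * (‖b‖ * ‖μ - ξ0‖) :=
      (norm_inner_le_norm _ _).trans (by gcongr; exact b.le_opNorm _)
    calc ‖⟪ν - η0, b μ⟫ + ⟪η0, b (μ - ξ0)⟫‖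
        ≤ ‖ν - η0‖ * (‖b‖ * ‖μ‖) + ‖η0‖ * (‖b‖ * ‖μ - ξ0‖) :=
          (norm_add_le _ _).trans (add_le_add h1 h2)
      _ = ‖b‖ * ‖μ‖ * ‖ν - η0‖ + ‖b‖ * ‖μ - ξ0‖ * ‖η0‖ := by ring
  have hsum : ‖b‖ * ‖μ‖ * ‖ν - η0‖ + ‖b‖ * ‖μ - ξ0‖ * ‖η0‖ ≤ ε / 3 := by
    have h1 : ‖b‖ * ‖μ‖ * ‖ν - η0‖ ≤ M * ‖μ‖ * d := by
      gcongr
      all_goals first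
        | exact le_add_of_nonneg_right zero_le_one
        | exact hη0.le
    have h2 : ‖b‖ * ‖μ - ξ0‖ * ‖η0‖ ≤ M * d * (‖ν‖ + 1) := by
      gcongr
      all_goals first
        | exact le_add_of_nonneg_right zero_le_one
        | exact hξ0.le
        | exact hη0norm
    have h3 : M * ‖μ‖ * d + M * d * (‖ν‖ + 1) = M * R * d := by rw [hR]; ring
    have h4 : M * R * d ≤ ε / 3 := by
      calc M * R * d ≤ M * R * (ε / (3 * M * R)) := by
            gcongr
            exact min_le_right _ _
        _ = ε / 3 := by field_simp
    calc ‖b‖ * ‖μ‖ * ‖ν - η0‖ + ‖b‖ * ‖μ - ξ0‖ * ‖η0‖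
        ≤ M * ‖μ‖ * d + M * d * (‖ν‖ + 1) := add_le_add h1 h2
      _ = M * R * d := h3
      _ ≤ ε / 3 := h4
  rw [dist_eq_norm]
  have htri : φ t - ⟪ν, b μ⟫ = (φ t - ψ t) + (ψ t - ⟪η0, b ξ0⟫) + (⟪(η0:H), b ξ0⟫ - ⟪ν, b μ⟫) := by
    ring
  calc ‖φ t - ⟪ν, b μ⟫‖
      ≤ ‖φ t - ψ t‖ + ‖ψ t - ⟪η0, b ξ0⟫‖ + ‖⟪(η0:H), b ξ0⟫ - ⟪ν, b μ⟫‖ := by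
        rw [htri]
        exact (norm_add_le _ _).trans (add_le_add_left (norm_add_le _ _) _)
    _ < ε / 3 + ε / 3 + ε / 3 := by
        have := hA.trans hsum
        have := hC.trans hsum
        linarith
    _ = ε := by ring

end Main

/-- If `a` is weakly `D`-differentiable then `(α_t(a) − a)/(it) → wD(a)` in the weak
operator topology as `t → 0`; in particular `t ↦ ⟨α_t(a) μ, ν⟩` is differentiable at `0`
with derivative `i ⟨wD(a) μ, ν⟩`. -/
theorem weakDeriv_is_weak_operator_limit
    (D : H →ₗ.[ℂ] H) (hD : IsSelfAdjoint D)
    (U : ℝ → H →L[ℂ] H) (hU : IsStoneGroupOf D U)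
    (a b : H →L[ℂ] H) (hw : IsWeakDeriv D a b) :
    (∀ μ ν : H,
      Tendsto (fun t : ℝ => (Complex.I * (t : ℂ))⁻¹ * ⟪ν, (conjAd U t a) μ - a μ⟫)
        (𝓝[≠] (0 : ℝ)) (𝓝 ⟪ν, b μ⟫)) ∧
    ∀ μ ν : H,
      HasDerivAt (fun t : ℝ => ⟪ν, (conjAd U t a) μ⟫) (Complex.I * ⟪ν, b μ⟫) 0 := by
  have hDd : Dense (D.domain : Set H) := hD.dense_domain
  refine ⟨fun μ ν => main_tendsto hDd hU hw μ ν, fun μ ν => ?_⟩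
  rw [hasDerivAt_iff_tendsto_slope]
  have h := (main_tendsto hDd hU hw μ ν).const_mul Complex.I
  refine h.congr' ?_
  filter_upwards [self_mem_nhdsWithin] with t ht
  have ht' : (t : ℝ) ≠ 0 := ht
  rw [inv_It_eq t ht', slope_def_module, sub_zero, conjAd_zero hU, ← inner_sub_right,
    ← mul_assoc]
  have hII : Complex.I * -Complex.I = 1 := by
    rw [mul_neg, Complex.I_mul_I, neg_neg]
  rw [hII, one_mul]
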